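/- arXiv:2011.10849 — 3 statements merged into one kernel-verified Lean document; each statement's English description precedes it below -/
import Mathlib

section
/- Let N be odd and a ∈ Z/N. The chirp function S_L^ω[τ'] = (1/√N)·e^{(2πi/N)(2⁻¹·a·τ'² + ωτ')}, where 2⁻¹ = (N+1)/2, is a common eigenvector of all the operators H_{τ,aτ}, τ ∈ Z/N; specifically H_{τ,aτ} S_L^ω = e^{(2πi/N)(2⁻¹·a·τ² − ωτ)} S_L^ω. -/
noncomputable def eN (N : ℕ) (x : ZMod N) : ℂ :=
  Complex.exp (2 * Real.pi * Complex.I * (x.val : ℂ) / N)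

noncomputable def Hshift (N : ℕ) (τ ω : ZMod N) (S : ZMod N → ℂ) : ZMod N → ℂ :=
  fun t => eN N (ω * t) * S (t - τ)

/-- The chirp `S_L^ω[τ'] = (1/√N)·e^{(2πi/N)(2⁻¹·a·τ'² + ωτ')}`, `2⁻¹ = (N+1)/2`. -/
noncomputable def chirp (N : ℕ) (a ω : ZMod N) : ZMod N → ℂ :=
  fun τ' => (1 / Real.sqrt N : ℝ) * eN N ((((N + 1) / 2 : ℕ) : ZMod N) * a * τ' ^ 2 + ω * τ')

lemma eN_pow (N : ℕ) [NeZero N] (x : ZMod N) :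
    eN N x = Complex.exp (2 * Real.pi * Complex.I / N) ^ x.val := by
  rw [← Complex.exp_nat_mul, eN]
  ring_nf

lemma zeta_pow_N (N : ℕ) [NeZero N] :
    Complex.exp (2 * Real.pi * Complex.I / N) ^ N = 1 := by
  rw [← Complex.exp_nat_mul]
  have hN : (N : ℂ) ≠ 0 := Nat.cast_ne_zero.mpr (NeZero.ne N)
  rw [show (N : ℂ) * (2 * Real.pi * Complex.I / N) = 2 * Real.pi * Complex.I by
    field_simp]
  simpa using Complex.exp_two_pi_mul_I

lemma eN_add (N : ℕ) [NeZero N] (x y : ZMod N) :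
    eN N (x + y) = eN N x * eN N y := by
  rw [eN_pow, eN_pow, eN_pow, ← pow_add]
  set ζ := Complex.exp (2 * Real.pi * Complex.I / N)
  have h : (x + y).val = (x.val + y.val) % N := ZMod.val_add x y
  rw [h]
  conv_rhs => rw [← Nat.div_add_mod (x.val + y.val) N]
  rw [pow_add, pow_mul, zeta_pow_N, one_pow, one_mul]

/-- For N odd, the chirp `S_L^ω` is a common eigenvector of all operators
`H_{τ,aτ}`, with eigenvalue `e^{(2πi/N)(2⁻¹·a·τ² − ωτ)}`. -/
theorem chirp_eigenvector (N : ℕ) [NeZero N] (hN : Odd N) (a ω τ : ZMod N) :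
    Hshift N τ (a * τ) (chirp N a ω) =
      fun t => eN N ((((N + 1) / 2 : ℕ) : ZMod N) * a * τ ^ 2 - ω * τ) * chirp N a ω t := by
  have h2 : (((N + 1) / 2 : ℕ) : ZMod N) * 2 = 1 := by
    have hev : (N + 1) / 2 * 2 = N + 1 := Nat.div_mul_cancel (by
      obtain ⟨k, hk⟩ := hN
      exact ⟨k + 1, by omega⟩)
    calc (((N + 1) / 2 : ℕ) : ZMod N) * 2 = (((N + 1) / 2 * 2 : ℕ) : ZMod N) := by
          push_cast; ring
      _ = ((N + 1 : ℕ) : ZMod N) := by rw [hev]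
      _ = 1 := by push_cast; simp
  funext t
  set c : ZMod N := (((N + 1) / 2 : ℕ) : ZMod N)
  show eN N (a * τ * t) * ((1 / Real.sqrt N : ℝ) * eN N (c * a * (t - τ) ^ 2 + ω * (t - τ)))
      = eN N (c * a * τ ^ 2 - ω * τ) * ((1 / Real.sqrt N : ℝ) * eN N (c * a * t ^ 2 + ω * t))
  rw [mul_left_comm (eN N (a * τ * t)), mul_left_comm (eN N (c * a * τ ^ 2 - ω * τ)),
    ← eN_add, ← eN_add]
  have key : a * τ * t + (c * a * (t - τ) ^ 2 + ω * (t - τ))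
      = c * a * τ ^ 2 - ω * τ + (c * a * t ^ 2 + ω * t) := by
    linear_combination (-(a * τ * t)) * h2
  rw [key]
end

section
/- Let L be a line in (Z/N)² and suppose S_L ∈ L²(Z/N) is a unit-norm common eigenvector of all operators H_{τ,ω} with (τ,ω) ∈ L. Then |⟨H_{τ,ω}S_L, S_L⟩| = 1 for (τ,ω) ∈ L, and |⟨H_{τ,ω}S_L, S_L⟩| = 0 for (τ,ω) ∉ L. -/
noncomputable def innerZ (N : ℕ) [NeZero N] (S₁ S₂ : ZMod N → ℂ) : ℂ :=
  ∑ t : ZMod N, S₁ t * (starRingEnd ℂ) (S₂ t)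

lemma exp_nat_aux (N : ℕ) (hN : (N:ℂ) ≠ 0) (m k : ℕ) :
    Complex.exp (2 * Real.pi * Complex.I * ((m:ℂ) + N * k) / N)
      = Complex.exp (2 * Real.pi * Complex.I * (m:ℂ) / N) := by
  rw [show 2 * Real.pi * Complex.I * ((m:ℂ) + N * k) / N
      = 2 * Real.pi * Complex.I * (m:ℂ) / N + ((k:ℤ):ℂ) * (2 * Real.pi * Complex.I) by
    field_simp; push_cast; ring]
  rw [Complex.exp_add, Complex.exp_int_mul_two_pi_mul_I, mul_one]

lemma eN_abs (N : ℕ) (x : ZMod N) : ‖eN N x‖ = 1 := by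
  unfold eN
  rw [show 2 * Real.pi * Complex.I * (x.val : ℂ) / N
      = ((2 * Real.pi * x.val / N : ℝ) : ℂ) * Complex.I by push_cast; ring]
  exact Complex.norm_exp_ofReal_mul_I _

lemma eN_mul_conj (N : ℕ) (x : ZMod N) : eN N x * (starRingEnd ℂ) (eN N x) = 1 := by
  rw [Complex.mul_conj]
  have := eN_abs N x
  rw [Complex.norm_def] at this
  have h : Complex.normSq (eN N x) = 1 := by
    nlinarith [Complex.normSq_nonneg (eN N x), Real.sq_sqrt (Complex.normSq_nonneg (eN N x))]
  rw [h]; norm_num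

lemma eN_ne_one (N : ℕ) [NeZero N] (x : ZMod N) (hx : x ≠ 0) : eN N x ≠ 1 := by
  have hN : (0:ℝ) < N := by exact_mod_cast Nat.pos_of_ne_zero (NeZero.ne N)
  have hv0 : 0 < x.val := Nat.pos_of_ne_zero (fun h => hx (by rwa [← ZMod.val_eq_zero]))
  have hvN : x.val < N := ZMod.val_lt x
  intro h
  rw [eN, Complex.exp_eq_one_iff] at h
  obtain ⟨n, hn⟩ := h
  have h2 : ((x.val : ℂ) / N) * (2 * Real.pi * Complex.I) = (n:ℂ) * (2 * Real.pi * Complex.I) := by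
    rw [← hn]; ring
  have h3 : ((x.val : ℂ) / N) = (n:ℂ) := by
    have hne : (2 * Real.pi * Complex.I : ℂ) ≠ 0 := by
      simp [Real.pi_ne_zero, Complex.I_ne_zero]
    exact mul_right_cancel₀ hne h2
  have h4 : ((x.val : ℝ) / N) = (n:ℝ) := by
    have : (((x.val : ℝ) / N : ℝ) : ℂ) = (((n:ℝ)):ℂ) := by push_cast; exact h3
    exact_mod_cast this
  have h5 : (0:ℝ) < n := by rw [← h4]; positivity
  have h6 : (n:ℝ) < 1 := by rw [← h4]; rw [div_lt_one hN]; exact_mod_cast hvN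
  have : (0:ℤ) < n := by exact_mod_cast h5
  have : n < 1 := by exact_mod_cast h6
  omega

lemma innerZ_unitary (N : ℕ) [NeZero N] (τ ω : ZMod N) (f g : ZMod N → ℂ) :
    innerZ N (Hshift N τ ω f) (Hshift N τ ω g) = innerZ N f g := by
  unfold innerZ Hshift
  have key : ∀ t : ZMod N,
      eN N (ω*t) * f (t-τ) * (starRingEnd ℂ) (eN N (ω*t) * g (t-τ))
        = f (t-τ) * (starRingEnd ℂ) (g (t-τ)) := by
    intro t
    rw [map_mul]
    calc eN N (ω*t) * f (t-τ) * ((starRingEnd ℂ) (eN N (ω*t)) * (starRingEnd ℂ) (g (t-τ)))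
        = (eN N (ω*t) * (starRingEnd ℂ) (eN N (ω*t))) * (f (t-τ) * (starRingEnd ℂ) (g (t-τ))) := by
          ring
      _ = f (t-τ) * (starRingEnd ℂ) (g (t-τ)) := by rw [eN_mul_conj]; ring
  rw [Finset.sum_congr rfl (fun t _ => key t)]
  exact Fintype.sum_equiv (Equiv.subRight τ) _ _ (fun t => rfl)

lemma innerZ_smul_left (N : ℕ) [NeZero N] (c : ℂ) (f g : ZMod N → ℂ) :
    innerZ N (fun t => c * f t) g = c * innerZ N f g := by
  unfold innerZ; rw [Finset.mul_sum]; exact Finset.sum_congr rfl (fun t _ => by ring)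

lemma innerZ_smul_right (N : ℕ) [NeZero N] (c : ℂ) (f g : ZMod N → ℂ) :
    innerZ N f (fun t => c * g t) = (starRingEnd ℂ) c * innerZ N f g := by
  unfold innerZ; rw [Finset.mul_sum]
  exact Finset.sum_congr rfl (fun t _ => by rw [map_mul]; ring)

lemma Hshift_smul (N : ℕ) (τ ω : ZMod N) (c : ℂ) (S : ZMod N → ℂ) :
    Hshift N τ ω (fun t => c * S t) = fun t => c * Hshift N τ ω S t := by
  funext t; simp only [Hshift]; ring

lemma Hshift_comm (N : ℕ) [NeZero N] (τ ω x y : ZMod N) (S : ZMod N → ℂ) :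
    Hshift N τ ω (Hshift N x y S)
      = fun t => eN N (ω * x - y * τ) * Hshift N x y (Hshift N τ ω S) t := by
  funext t
  simp only [Hshift]
  rw [show t - τ - x = t - x - τ by ring]
  rw [show eN N (ω*t) * (eN N (y*(t-τ)) * S (t-x-τ))
      = (eN N (ω*t) * eN N (y*(t-τ))) * S (t-x-τ) by ring,
    show eN N (ω*x - y*τ) * (eN N (y*t) * (eN N (ω*(t-x)) * S (t-x-τ)))
      = (eN N (ω*x - y*τ) * (eN N (y*t) * eN N (ω*(t-x)))) * S (t-x-τ) by ring]
  congr 1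
  rw [← eN_add, ← eN_add, ← eN_add]
  congr 1
  ring

lemma bezout_of_inj (N : ℕ) [NeZero N] (a b : ZMod N)
    (htriv : ∀ n : ZMod N, n * a = 0 → n * b = 0 → n = 0) :
    ∃ u v : ZMod N, u * a + v * b = 1 := by
  have hNpos : 0 < N := Nat.pos_of_ne_zero (NeZero.ne N)
  set A := a.val with hA
  set B := b.val with hB
  have hg : Nat.gcd (Nat.gcd A B) N = 1 := by
    by_contra hg1
    set g := Nat.gcd (Nat.gcd A B) N with hgdef
    have hgN : g ∣ N := Nat.gcd_dvd_right _ _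
    have hgpos : 0 < g := Nat.pos_of_ne_zero (fun h0 => by
      have := Nat.eq_zero_of_gcd_eq_zero_right h0
      omega)
    have hg2 : 2 ≤ g := by omega
    set m := N / g with hm
    have hmN : m < N := Nat.div_lt_self hNpos hg2
    have hm0 : 0 < m := Nat.div_pos (Nat.le_of_dvd hNpos hgN) hgpos
    have hgA : g ∣ A := (Nat.gcd_dvd_left _ _).trans (Nat.gcd_dvd_left A B)
    have hgB : g ∣ B := (Nat.gcd_dvd_left _ _).trans (Nat.gcd_dvd_right A B)
    have hma : ((m : ℕ) : ZMod N) * a = 0 := by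
      obtain ⟨k, hk⟩ := hgA
      have : ((m * A : ℕ) : ZMod N) = 0 := by
        rw [ZMod.natCast_eq_zero_iff]
        exact ⟨k, by rw [hk, ← mul_assoc, Nat.div_mul_cancel hgN]⟩
      rwa [Nat.cast_mul, ZMod.natCast_val, ZMod.cast_id] at this
    have hmb : ((m : ℕ) : ZMod N) * b = 0 := by
      obtain ⟨k, hk⟩ := hgB
      have : ((m * B : ℕ) : ZMod N) = 0 := by
        rw [ZMod.natCast_eq_zero_iff]
        exact ⟨k, by rw [hk, ← mul_assoc, Nat.div_mul_cancel hgN]⟩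
      rwa [Nat.cast_mul, ZMod.natCast_val, ZMod.cast_id] at this
    have := htriv _ hma hmb
    rw [ZMod.natCast_eq_zero_iff] at this
    have := Nat.le_of_dvd hm0 this
    omega
  set x := Int.gcdA (A:ℤ) (B:ℤ) with hx
  set y := Int.gcdB (A:ℤ) (B:ℤ) with hy
  set s := Int.gcdA ((Nat.gcd A B : ℕ):ℤ) (N:ℤ) with hs
  set t := Int.gcdB ((Nat.gcd A B : ℕ):ℤ) (N:ℤ) with ht
  have e1 : ((Nat.gcd A B : ℕ) : ℤ) = (A:ℤ) * x + (B:ℤ) * y := by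
    have := Int.gcd_eq_gcd_ab (A:ℤ) (B:ℤ)
    rwa [Int.gcd_natCast_natCast] at this
  have e2 : (1 : ℤ) = ((Nat.gcd A B : ℕ):ℤ) * s + (N:ℤ) * t := by
    have := Int.gcd_eq_gcd_ab ((Nat.gcd A B : ℕ):ℤ) (N:ℤ)
    rwa [Int.gcd_natCast_natCast, hg, Nat.cast_one] at this
  have e3 : (1 : ℤ) = (A:ℤ) * (x * s) + (B:ℤ) * (y * s) + (N:ℤ) * t := by
    rw [e2, e1]; ring
  refine ⟨((x * s : ℤ) : ZMod N), ((y * s : ℤ) : ZMod N), ?_⟩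
  have := congrArg (fun z : ℤ => (z : ZMod N)) e3
  have hAa : ((A:ℕ) : ZMod N) = a := by rw [hA, ZMod.natCast_val, ZMod.cast_id]
  have hBb : ((B:ℕ) : ZMod N) = b := by rw [hB, ZMod.natCast_val, ZMod.cast_id]
  have hN0 : ((N:ℕ) : ZMod N) = 0 := ZMod.natCast_self N
  push_cast at this ⊢
  rw [hAa, hBb, hN0] at this
  linear_combination this.symm

/-- If S_L is a unit-norm common eigenvector of all the operators H_{τ,ω} with
(τ,ω) in a line L (the Z/N-span of (a,b), having N elements), then
|⟨H_{τ,ω}S_L, S_L⟩| = 1 on L and = 0 off L. -/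
theorem chirp_ambiguity_support (N : ℕ) [NeZero N] (a b : ZMod N)
    (L : Set (ZMod N × ZMod N))
    (hL : L = {p | ∃ n : ZMod N, p = (n * a, n * b)})
    (hcard : L.ncard = N)
    (S_L : ZMod N → ℂ)
    (hnorm : innerZ N S_L S_L = 1)
    (heig : ∀ p ∈ L, ∃ lam : ℂ, Hshift N p.1 p.2 S_L = fun t => lam * S_L t)
    (τ ω : ZMod N) :
    ((τ, ω) ∈ L → ‖innerZ N (Hshift N τ ω S_L) S_L‖ = 1) ∧
    ((τ, ω) ∉ L → ‖innerZ N (Hshift N τ ω S_L) S_L‖ = 0) := by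
  constructor
  · intro hmem
    obtain ⟨lam, hlam⟩ := heig (τ, ω) hmem
    have h1 : innerZ N (Hshift N τ ω S_L) S_L = lam := by
      rw [hlam, innerZ_smul_left, hnorm, mul_one]
    have h2 : lam * ((starRingEnd ℂ) lam * innerZ N S_L S_L) = innerZ N S_L S_L := by
      rw [← innerZ_smul_right, ← innerZ_smul_left, ← hlam, innerZ_unitary]
    rw [hnorm] at h2
    have h3 : Complex.normSq lam = 1 := by
      have h4 : lam * (starRingEnd ℂ) lam = 1 := by linear_combination h2
      rw [Complex.mul_conj] at h4
      exact_mod_cast h4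
    rw [h1, Complex.norm_def, h3, Real.sqrt_one]
  · intro hnot
    have hab : (a, b) ∈ L := by rw [hL]; exact ⟨1, by simp⟩
    obtain ⟨lam, hlam⟩ := heig (a, b) hab
    have h2 : lam * ((starRingEnd ℂ) lam * innerZ N S_L S_L) = innerZ N S_L S_L := by
      rw [← innerZ_smul_right, ← innerZ_smul_left, ← hlam, innerZ_unitary]
    rw [hnorm] at h2
    have hll : lam * (starRingEnd ℂ) lam = 1 := by linear_combination h2
    -- ω * a - b * τ ≠ 0
    have hc : ω * a - b * τ ≠ 0 := by
      intro h0
      apply hnot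
      have hx : ω * a = b * τ := sub_eq_zero.mp h0
      have htriv : ∀ n : ZMod N, n * a = 0 → n * b = 0 → n = 0 := by
        have hinj : Function.Injective (fun n : ZMod N => ((n * a, n * b) : ZMod N × ZMod N)) := by
          set f := fun n : ZMod N => ((n * a, n * b) : ZMod N × ZMod N) with hf
          have h1 : L = ↑(Finset.univ.image f) := by
            rw [hL]; ext p; simp [hf, eq_comm]
          rw [h1, Set.ncard_coe_finset] at hcard
          have h2' : (Finset.univ.image f).card = (Finset.univ : Finset (ZMod N)).card := by
            rw [hcard, Finset.card_univ]; exact (ZMod.card N).symm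
          have hio := Finset.card_image_iff.mp h2'
          intro x y hxy
          exact hio (Finset.mem_coe.mpr (Finset.mem_univ x))
            (Finset.mem_coe.mpr (Finset.mem_univ y)) hxy
        intro n hna hnb
        have : ((n * a, n * b) : ZMod N × ZMod N) = ((0 * a, 0 * b) : ZMod N × ZMod N) := by
          rw [hna, hnb, zero_mul, zero_mul]
        exact hinj this
      obtain ⟨u, v, huv⟩ := bezout_of_inj N a b htriv
      rw [hL]
      refine ⟨u * τ + v * ω, ?_⟩
      have hτ : (u * τ + v * ω) * a = τ := by linear_combination v * hx + τ * huv
      have hω : (u * τ + v * ω) * b = ω := by linear_combination (-u) * hx + ω * huv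
      rw [hτ, hω]
    have step1 : innerZ N (Hshift N τ ω (Hshift N a b S_L)) (Hshift N a b S_L)
        = innerZ N (Hshift N τ ω S_L) S_L := by
      rw [hlam, Hshift_smul, innerZ_smul_left, innerZ_smul_right, ← mul_assoc, hll, one_mul]
    have step2 : innerZ N (Hshift N τ ω (Hshift N a b S_L)) (Hshift N a b S_L)
        = eN N (ω * a - b * τ) * innerZ N (Hshift N τ ω S_L) S_L := by
      rw [Hshift_comm, innerZ_smul_left, innerZ_unitary]
    have hne := eN_ne_one N _ hc
    have h0 : (1 - eN N (ω * a - b * τ)) * innerZ N (Hshift N τ ω S_L) S_L = 0 := by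
      linear_combination step2 - step1
    rcases mul_eq_zero.mp h0 with h | h
    · exact absurd (by linear_combination -h : eN N (ω * a - b * τ) = 1) hne
    · rw [h, norm_zero]
end

section
/- One-sparse bit detection without noise: let N = 2^n, and let S[τ] = α·e^{2πi ω₀ τ/N} with α ≠ 0. Suppose the m−1 least significant bits of ω₀ are zero, where 1 ≤ m ≤ n. Then for any r ∈ Z/N: the m-th bit of ω₀ is 0 if and only if S[r] − S[r + N/2^m] = 0, and the m-th bit of ω₀ is 1 if and only if S[r] + S[r + N/2^m] = 0. -/
/-- One-sparse bit detection without noise: for N = 2^n and the pure exponential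
S[τ] = α·e^{2πi ω₀τ/N} with α ≠ 0, if the m−1 least significant bits of ω₀
vanish (1 ≤ m ≤ n), then the m-th bit of ω₀ is read off from whether
S[r] − S[r + N/2^m] or S[r] + S[r + N/2^m] vanishes. -/
theorem bit_by_bit_no_noise (n : ℕ) (N : ℕ) (hN : N = 2 ^ n) [NeZero N]
    (α : ℂ) (hα : α ≠ 0) (ω₀ : ZMod N) (S : ZMod N → ℂ)
    (hS : ∀ τ : ZMod N, S τ = α * Complex.exp (2 * Real.pi * Complex.I * (ω₀.val : ℂ) * (τ.val : ℂ) / N))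
    (m : ℕ) (hm1 : 1 ≤ m) (hmn : m ≤ n)
    (hbits : 2 ^ (m - 1) ∣ ω₀.val) (r : ZMod N) :
    (Nat.testBit ω₀.val (m - 1) = false ↔ S r - S (r + ((N / 2 ^ m : ℕ) : ZMod N)) = 0) ∧
    (Nat.testBit ω₀.val (m - 1) = true ↔ S r + S (r + ((N / 2 ^ m : ℕ) : ZMod N)) = 0) := by
  have hN0 : 0 < N := Nat.pos_of_ne_zero (NeZero.ne N)
  have hNC : (N : ℂ) ≠ 0 := Nat.cast_ne_zero.mpr (NeZero.ne N)
  set t : ℕ := N / 2 ^ m with ht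
  obtain ⟨k, hk⟩ := hbits
  set w : ℕ := ω₀.val with hw
  have hdvd : 2 ^ m ∣ N := hN ▸ pow_dvd_pow 2 hmn
  have htN : t * 2 ^ m = N := Nat.div_mul_cancel hdvd
  have hm : m - 1 + 1 = m := Nat.succ_pred_eq_of_pos hm1
  -- the key root of unity
  have hE : Complex.exp (2 * Real.pi * Complex.I * (w : ℂ) * (t : ℂ) / N)
      = (-1 : ℂ) ^ k := by
    have h2m : 2 ^ m = 2 ^ (m - 1) * 2 := by conv_lhs => rw [← hm, pow_succ]
    have hnat : 2 * (w * t) = k * N := by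
      rw [hk, ← htN, h2m]; ring
    have hC : (2 : ℂ) * (w * t) = k * N := by exact_mod_cast hnat
    have harg : 2 * Real.pi * Complex.I * (w : ℂ) * (t : ℂ) / N
        = (k : ℂ) * (Real.pi * Complex.I) := by
      field_simp
      linear_combination hC
    rw [harg, Complex.exp_nat_mul, Complex.exp_pi_mul_I]
  have htlt : t < N := by
    apply Nat.div_lt_self hN0
    exact Nat.one_lt_pow (by omega) (by norm_num)
  -- value of the shifted point
  have hval : ((r + ((t : ℕ) : ZMod N)).val) % N = (r.val + t) % N := by
    rw [ZMod.val_add, ZMod.val_natCast, Nat.mod_eq_of_lt htlt]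
    exact Nat.mod_mod_of_dvd _ dvd_rfl
  set a : ℕ := (r + ((t : ℕ) : ZMod N)).val with ha
  set b : ℕ := r.val + t with hb
  have hab : a = b % N := by
    rw [← hval]; exact (Nat.mod_eq_of_lt (ZMod.val_lt _)).symm
  have hq : b = N * (b / N) + a := by
    conv_lhs => rw [← Nat.div_add_mod b N]
    rw [← hab]
  set q : ℕ := b / N with hqd
  have hperiod : Complex.exp (2 * Real.pi * Complex.I * (w : ℂ) * (b : ℂ) / N)
      = Complex.exp (2 * Real.pi * Complex.I * (w : ℂ) * (a : ℂ) / N) := by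
    have hbC : (b : ℂ) = (a : ℂ) + (q : ℂ) * N := by
      rw [hq]; push_cast; ring
    have : 2 * Real.pi * Complex.I * (w : ℂ) * (b : ℂ) / N
        = 2 * Real.pi * Complex.I * (w : ℂ) * (a : ℂ) / N
          + ((w * q : ℕ) : ℂ) * (2 * Real.pi * Complex.I) := by
      rw [hbC]; push_cast; field_simp
    rw [this, Complex.exp_add, Complex.exp_nat_mul, Complex.exp_two_pi_mul_I,
      one_pow, mul_one]
  -- the shift relation
  have hstep : S (r + ((t : ℕ) : ZMod N)) = S r * (-1 : ℂ) ^ k := by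
    rw [hS, hS, ← ha, ← hE]
    rw [← hperiod]
    rw [show 2 * Real.pi * Complex.I * (w : ℂ) * (b : ℂ) / N
        = 2 * Real.pi * Complex.I * (w : ℂ) * (r.val : ℂ) / N
          + 2 * Real.pi * Complex.I * (w : ℂ) * (t : ℂ) / N by
      rw [hb]; push_cast; field_simp]
    rw [Complex.exp_add]; ring
  have hSr : S r ≠ 0 := by
    rw [hS]
    exact mul_ne_zero hα (Complex.exp_ne_zero _)
  have hbit : Nat.testBit w (m - 1) = decide (k % 2 = 1) := by
    rw [Nat.testBit_eq_decide_div_mod_eq]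
    congr 1
    rw [hk, Nat.mul_div_cancel_left _ (Nat.pow_pos (by norm_num))]
  rcases Nat.even_or_odd k with hke | hko
  · have h1 : (-1 : ℂ) ^ k = 1 := hke.neg_one_pow
    have hbf : Nat.testBit w (m - 1) = false := by
      rw [hbit]; simp [Nat.even_iff.mp hke]
    constructor
    · simp only [hbf]
      constructor
      · intro _; rw [hstep, h1]; ring
      · intro _; trivial
    · simp only [hbf]
      constructor
      · intro h; exact absurd h (by simp)
      · intro h
        rw [hstep, h1, mul_one] at h
        exact absurd (by linear_combination h / 2 : S r = 0) hSr
  · have h1 : (-1 : ℂ) ^ k = -1 := hko.neg_one_pow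
    have hbt : Nat.testBit w (m - 1) = true := by
      rw [hbit]; simp [Nat.odd_iff.mp hko]
    constructor
    · simp only [hbt]
      constructor
      · intro h; exact absurd h (by simp)
      · intro h
        rw [hstep, h1] at h
        exact absurd (by linear_combination h / 2 : S r = 0) hSr
    · simp only [hbt]
      constructor
      · intro _; rw [hstep, h1]; ring
      · intro _; trivial
end
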